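/- Let A be a finite abelian group and ℓ the smallest prime dividing |A|. Suppose A/A[ℓ] is cyclic, where A[ℓ] denotes the ℓ-torsion subgroup. Then every subgroup H of A generated by two elements can be generated by two elements a, b with b of order dividing ℓ. -/

import Mathlib

/-- `ℚ/ℤ` as `AddCircle (1 : ℚ)`. -/
abbrev QZ := AddCircle (1 : ℚ)

/-- The `ℓ`-torsion subgroup `A[ℓ] = {a : ℓ • a = 0}`. -/
def torsAt (ℓ : ℕ) (A : Type*) [AddCommGroup A] : AddSubgroup A where
  carrier := {a | ℓ • a = 0}
  zero_mem' := by simp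
  add_mem' := by
    intro a b ha hb
    simp only [Set.mem_setOf_eq, smul_add] at *
    rw [ha, hb, add_zero]
  neg_mem' := by
    intro a ha
    simp only [Set.mem_setOf_eq, smul_neg] at *
    rw [ha, neg_zero]

lemma closure_pair_unimodular {A : Type*} [AddCommGroup A] (a b : A) (u v s t : ℤ)
    (h : u * t - v * s = 1) :
    AddSubgroup.closure {a, b} = AddSubgroup.closure {u • a + v • b, s • a + t • b} := by
  apply le_antisymm
  · rw [AddSubgroup.closure_le]
    intro x hx
    have h1 : (u • a + v • b) ∈ AddSubgroup.closure {u • a + v • b, s • a + t • b} :=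
      AddSubgroup.subset_closure (Set.mem_insert _ _)
    have h2 : (s • a + t • b) ∈ AddSubgroup.closure {u • a + v • b, s • a + t • b} :=
      AddSubgroup.subset_closure (Set.mem_insert_of_mem _ rfl)
    simp only [Set.mem_insert_iff, Set.mem_singleton_iff] at hx
    rcases hx with rfl | rfl
    · have key : t • (u • x + v • b) - v • (s • x + t • b) = (u * t - v * s) • x := by module
      have mem := sub_mem (AddSubgroup.zsmul_mem _ h1 t) (AddSubgroup.zsmul_mem _ h2 v)
      rwa [key, h, one_smul] at mem
    · have key : u • (s • a + t • x) - s • (u • a + v • x) = (u * t - v * s) • x := by module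
      have mem := sub_mem (AddSubgroup.zsmul_mem _ h2 u) (AddSubgroup.zsmul_mem _ h1 s)
      rwa [key, h, one_smul] at mem
  · rw [AddSubgroup.closure_le]
    intro x hx
    have h1 : a ∈ AddSubgroup.closure {a, b} :=
      AddSubgroup.subset_closure (Set.mem_insert _ _)
    have h2 : b ∈ AddSubgroup.closure {a, b} :=
      AddSubgroup.subset_closure (Set.mem_insert_of_mem _ rfl)
    simp only [Set.mem_insert_iff, Set.mem_singleton_iff] at hx
    rcases hx with rfl | rfl <;>
      exact add_mem (AddSubgroup.zsmul_mem _ h1 _) (AddSubgroup.zsmul_mem _ h2 _)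

/-- If `A/A[ℓ]` is cyclic (ℓ the smallest prime dividing `|A|`), every 2-generated
subgroup of `A` is generated by two elements one of which has order dividing `ℓ`. -/
theorem stmt0 (A : Type*) [AddCommGroup A] [Fintype A] (ℓ : ℕ)
    (hℓ : ℓ.Prime) (hdvd : ℓ ∣ Fintype.card A)
    (hmin : ∀ p : ℕ, p.Prime → p ∣ Fintype.card A → ℓ ≤ p)
    (hcyc : IsAddCyclic (A ⧸ torsAt ℓ A))
    (H : AddSubgroup A) (a b : A) (hH : H = AddSubgroup.closure {a, b}) :
    ∃ a' b' : A, H = AddSubgroup.closure {a', b'} ∧ addOrderOf b' ∣ ℓ := by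
  classical
  obtain ⟨g, hg⟩ := hcyc
  set π := QuotientAddGroup.mk' (torsAt ℓ A) with hπ
  obtain ⟨m, hm⟩ := AddSubgroup.mem_zmultiples_iff.mp (hg (π a))
  obtain ⟨k, hk⟩ := AddSubgroup.mem_zmultiples_iff.mp (hg (π b))
  have tors_of_pi_zero : ∀ x : A, π x = 0 → addOrderOf x ∣ ℓ := by
    intro x hx
    have hx' : x ∈ torsAt ℓ A := (QuotientAddGroup.eq_zero_iff x).mp hx
    exact addOrderOf_dvd_iff_nsmul_eq_zero.mpr hx'
  by_cases hd : Int.gcd m k = 0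
  · -- then m = 0 and k = 0, so b is already torsion
    have hk0 : k = 0 := by
      have := Int.gcd_eq_zero_iff.mp hd
      exact this.2
    refine ⟨a, b, hH, tors_of_pi_zero b ?_⟩
    rw [← hk, hk0, zero_zsmul]
  · set d : ℤ := (Int.gcd m k : ℤ) with hdd
    have hd0 : d ≠ 0 := Int.natCast_ne_zero.mpr hd
    obtain ⟨m', hm'⟩ : d ∣ m := Int.gcd_dvd_left m k
    obtain ⟨k', hk'⟩ : d ∣ k := Int.gcd_dvd_right m k
    set u := Int.gcdA m k with hu
    set v := Int.gcdB m k with hv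
    have hbz : d = m * u + k * v := Int.gcd_eq_gcd_ab m k
    rw [hm', hk'] at hbz
    have hdet : u * m' - v * (-k') = 1 := by
      apply mul_left_cancel₀ hd0
      linear_combination -hbz
    have hcl := closure_pair_unimodular a b u v (-k') m' hdet
    refine ⟨u • a + v • b, (-k') • a + m' • b, by rw [hH, hcl], ?_⟩
    apply tors_of_pi_zero
    have : π ((-k') • a + m' • b) = (-k') • π a + m' • π b := by
      simp [map_zsmul]
    rw [this, ← hm, ← hk, smul_smul, smul_smul, ← add_smul]
    have : -k' * m + m' * k = 0 := by rw [hm', hk']; ring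
    rw [this, zero_smul]
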